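/- arXiv:1109.1427 — 2 statements merged into one kernel-verified Lean document; each statement's English description precedes it below -/
import Mathlib

section
/- Let (hⁱ) be harmonic polynomials converging uniformly on compact sets to a nonconstant harmonic polynomial h, and let B be a closed ball with Σ_h ∩ int B ≠ ∅. If Σ_{hⁱ} ∩ B converges in the Hausdorff distance to a closed set F ⊂ B, then F ⊂ Σ_h ∩ B and F ∩ int B = Σ_h ∩ int B. -/
open MvPolynomial Metric Filter
open scoped ENNReal

/-- Evaluate a multivariate polynomial at a point of Euclidean space. -/
noncomputable def evalPt {n : ℕ} (p : MvPolynomial (Fin n) ℝ)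
    (y : EuclideanSpace ℝ (Fin n)) : ℝ :=
  MvPolynomial.eval (fun i => y i) p

/-- The zero set of a polynomial. -/
def zeroSet {n : ℕ} (p : MvPolynomial (Fin n) ℝ) : Set (EuclideanSpace ℝ (Fin n)) :=
  {y | evalPt p y = 0}

/-- The polynomial y ↦ p(y + x). -/
noncomputable def translatePoly {n : ℕ} (p : MvPolynomial (Fin n) ℝ)
    (x : EuclideanSpace ℝ (Fin n)) : MvPolynomial (Fin n) ℝ :=
  MvPolynomial.bind₁ (fun i => MvPolynomial.X i + MvPolynomial.C (x i)) p

/-- The homogeneous part of degree `k` of `p` centered at `x`. -/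
noncomputable def homPart {n : ℕ} (p : MvPolynomial (Fin n) ℝ)
    (x : EuclideanSpace ℝ (Fin n)) (k : ℕ) : MvPolynomial (Fin n) ℝ :=
  MvPolynomial.homogeneousComponent k (translatePoly p x)

/-- The sup norm of |q| on the closed ball B(0,r), as an extended nonnegative real. -/
noncomputable def supNormBall {n : ℕ} (q : MvPolynomial (Fin n) ℝ) (r : ℝ) : ℝ≥0∞ :=
  ⨆ y ∈ Metric.closedBall (0 : EuclideanSpace ℝ (Fin n)) r, ENNReal.ofReal |evalPt q y|

/-- ζ_k(p,x,r): the relative size of the homogeneous part of degree k of a polynomial of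
degree d, centered at x, on the ball of radius r. -/
noncomputable def zeta {n : ℕ} (d : ℕ) (p : MvPolynomial (Fin n) ℝ)
    (x : EuclideanSpace ℝ (Fin n)) (k : ℕ) (r : ℝ) : ℝ≥0∞ :=
  ⨆ j ∈ (Finset.range (d + 1)).erase k,
    supNormBall (homPart p x j) r / supNormBall (homPart p x k) r

/-- A polynomial is harmonic if its Laplacian vanishes. -/
def IsHarmonic {n : ℕ} (p : MvPolynomial (Fin n) ℝ) : Prop :=
  ∑ i : Fin n, MvPolynomial.pderiv i (MvPolynomial.pderiv i p) = 0

/-- The local flatness θ_Σ(x,r): the normalized minimal Hausdorff distance between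
Σ ∩ B(x,r) and (x + L) ∩ B(x,r) over hyperplanes L through the origin. -/
noncomputable def flatness {n : ℕ} (A : Set (EuclideanSpace ℝ (Fin n)))
    (x : EuclideanSpace ℝ (Fin n)) (r : ℝ) : ℝ :=
  (1 / r) * ⨅ L : {L : Submodule ℝ (EuclideanSpace ℝ (Fin n)) // Module.finrank ℝ L = n - 1},
    Metric.hausdorffDist (A ∩ Metric.closedBall x r)
      (((fun y => x + y) '' (L.1 : Set (EuclideanSpace ℝ (Fin n)))) ∩ Metric.closedBall x r)

/-- Dp(x) ≠ 0 : some partial derivative of p is nonzero at x. -/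
def gradNeZero {n : ℕ} (p : MvPolynomial (Fin n) ℝ) (x : EuclideanSpace ℝ (Fin n)) : Prop :=
  ∃ i : Fin n, MvPolynomial.eval (fun j => x j) (MvPolynomial.pderiv i p) ≠ 0

/-- Sup of |h| on the unit sphere. -/
noncomputable def sphereSup {n : ℕ} (h : MvPolynomial (Fin n) ℝ) : ℝ :=
  sSup ((fun θ => |evalPt h θ|) '' Metric.sphere (0 : EuclideanSpace ℝ (Fin n)) 1)

/-- The polynomial y ↦ p(t·y). -/
noncomputable def dilatePoly {n : ℕ} (p : MvPolynomial (Fin n) ℝ) (t : ℝ) :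
    MvPolynomial (Fin n) ℝ :=
  MvPolynomial.bind₁ (fun i => MvPolynomial.C t * MvPolynomial.X i) p


open Real MeasureTheory

noncomputable def mG : ℕ → ℝ
  | 0 => 1
  | 1 => 0
  | (k+2) => ((k:ℝ)+1)/2 * mG k

lemma mG_nonneg : ∀ k, 0 ≤ mG k
  | 0 => by simp [mG]
  | 1 => by simp [mG]
  | (k+2) => by
      have := mG_nonneg k
      rw [mG]; positivity

noncomputable def TG {n : ℕ} (p : MvPolynomial (Fin n) ℝ) : ℝ :=
  ∑ α ∈ p.support, coeff α p * ∏ i, mG (α i)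

lemma TG_eq_of_subset {n : ℕ} (p : MvPolynomial (Fin n) ℝ) {s : Finset (Fin n →₀ ℕ)}
    (h : p.support ⊆ s) : TG p = ∑ α ∈ s, coeff α p * ∏ i, mG (α i) := by
  refine Finset.sum_subset h (fun α _ hα => ?_)
  rw [MvPolynomial.notMem_support_iff.mp hα, zero_mul]

lemma TG_add {n : ℕ} (p q : MvPolynomial (Fin n) ℝ) : TG (p + q) = TG p + TG q := by
  classical
  rw [TG_eq_of_subset (p+q) (s := p.support ∪ q.support) (by classical exact MvPolynomial.support_add),
    TG_eq_of_subset p (s := p.support ∪ q.support) Finset.subset_union_left,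
    TG_eq_of_subset q (s := p.support ∪ q.support) Finset.subset_union_right,
    ← Finset.sum_add_distrib]
  exact Finset.sum_congr rfl fun α _ => by rw [coeff_add, add_mul]

lemma TG_zero {n : ℕ} : TG (0 : MvPolynomial (Fin n) ℝ) = 0 := by simp [TG]

lemma TG_sum {n : ℕ} {ι : Type*} (s : Finset ι) (f : ι → MvPolynomial (Fin n) ℝ) :
    TG (∑ i ∈ s, f i) = ∑ i ∈ s, TG (f i) := by
  classical
  induction s using Finset.induction_on with
  | empty => simp [TG_zero]
  | insert _ _ h ih => rw [Finset.sum_insert h, TG_add, ih, Finset.sum_insert h]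

lemma TG_monomial {n : ℕ} (α : Fin n →₀ ℕ) (c : ℝ) :
    TG (monomial α c) = c * ∏ i, mG (α i) := by
  rcases eq_or_ne c 0 with rfl | hc
  · simp [TG]
  · rw [TG, support_monomial, if_neg hc, Finset.sum_singleton, coeff_monomial, if_pos rfl]

lemma mG_key (a : ℕ) : (a : ℝ) * ((a - 1 : ℕ) : ℝ) * mG (a - 2) = 2 * a * mG a := by
  match a with
  | 0 => simp
  | 1 => simp [mG]
  | (k+2) =>
    have h2 : (k + 2) - 2 = k := by omega
    have h1 : (k + 2) - 1 = k + 1 := by omega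
    rw [h2, h1, mG]
    push_cast
    ring

lemma TG_pderiv2_monomial {n : ℕ} (α : Fin n →₀ ℕ) (c : ℝ) (i : Fin n) :
    TG (pderiv i (pderiv i (monomial α c))) = 2 * (α i : ℝ) * TG (monomial α c) := by
  classical
  rw [pderiv_monomial, pderiv_monomial, TG_monomial, TG_monomial]
  have hsub : α - Finsupp.single i 1 - Finsupp.single i 1 = α - Finsupp.single i 2 := by
    rw [tsub_tsub, ← Finsupp.single_add]
  rw [hsub]
  have hβ : ∀ j : Fin n, j ≠ i → (((α - Finsupp.single i 2) : Fin n →₀ ℕ) j) = α j := by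
    intro j hj
    rw [Finsupp.tsub_apply, Finsupp.single_apply, if_neg (Ne.symm hj), Nat.sub_zero]
  have hβi : (((α - Finsupp.single i 2) : Fin n →₀ ℕ) i) = α i - 2 := by
    rw [Finsupp.tsub_apply, Finsupp.single_apply, if_pos rfl]
  have hαi : (((α - Finsupp.single i 1) : Fin n →₀ ℕ) i) = α i - 1 := by
    rw [Finsupp.tsub_apply, Finsupp.single_apply, if_pos rfl]
  rw [hαi]
  rw [← Finset.mul_prod_erase Finset.univ _ (Finset.mem_univ i),
      ← Finset.mul_prod_erase Finset.univ (fun j => mG (α j)) (Finset.mem_univ i)]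
  have hprod : ∏ j ∈ Finset.univ.erase i, mG (((α - Finsupp.single i 2) : Fin n →₀ ℕ) j)
      = ∏ j ∈ Finset.univ.erase i, mG (α j) :=
    Finset.prod_congr rfl fun j hj => by rw [hβ j (Finset.mem_erase.mp hj).1]
  rw [hprod, hβi]
  have := mG_key (α i)
  linear_combination (c * ∏ j ∈ Finset.univ.erase i, mG (α j)) * this

lemma TG_lap {n : ℕ} (P : MvPolynomial (Fin n) ℝ) {k : ℕ} (hom : P.IsHomogeneous k) :
    TG (∑ i : Fin n, pderiv i (pderiv i P)) = 2 * k * TG P := by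
  classical
  conv_lhs => rw [← P.support_sum_monomial_coeff]
  simp_rw [map_sum]
  rw [Finset.sum_comm, TG_sum]
  have : ∀ α ∈ P.support,
      TG (∑ i : Fin n, pderiv i (pderiv i (monomial α (coeff α P))))
        = 2 * k * TG (monomial α (coeff α P)) := by
    intro α hα
    rw [TG_sum]
    have hdeg : ∑ i : Fin n, (α i : ℝ) = (k : ℝ) := by
      have h1 : α.degree = k := by
        by_contra hne
        exact MvPolynomial.mem_support_iff.mp hα (hom.coeff_eq_zero hne)
      have h2 : ∑ i : Fin n, α i = α.degree := by
        rw [Finsupp.degree]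
        exact (Finset.sum_subset (Finset.subset_univ _)
          (fun i _ hi => Finsupp.notMem_support_iff.mp hi)).symm
      rw [← Nat.cast_sum, h2, h1]
    calc ∑ i : Fin n, TG (pderiv i (pderiv i (monomial α (coeff α P))))
        = ∑ i : Fin n, 2 * (α i : ℝ) * TG (monomial α (coeff α P)) := by
          exact Finset.sum_congr rfl fun i _ => TG_pderiv2_monomial α (coeff α P) i
      _ = 2 * k * TG (monomial α (coeff α P)) := by
          rw [← Finset.sum_mul, ← Finset.mul_sum, hdeg]
  rw [Finset.sum_congr rfl this, ← Finset.mul_sum, ← TG_sum,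
    P.support_sum_monomial_coeff]

lemma TG_eq_zero_of_harmonic_homogeneous {n k : ℕ} (P : MvPolynomial (Fin n) ℝ)
    (hh : IsHarmonic P) (hom : P.IsHomogeneous k) (hk : k ≠ 0) : TG P = 0 := by
  have h0 := TG_lap P hom
  rw [hh, TG_zero] at h0
  have : (2 : ℝ) * k ≠ 0 := by
    simp only [ne_eq, mul_eq_zero, OfNat.ofNat_ne_zero, Nat.cast_eq_zero, false_or]
    exact hk
  field_simp at h0
  exact (mul_eq_zero.mp h0.symm).resolve_left this

lemma integrable_pow_gauss (k : ℕ) : Integrable (fun x : ℝ => x ^ k * Real.exp (-x^2)) := by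
  have h := integrable_rpow_mul_exp_neg_mul_sq (b := 1) one_pos
    (s := (k : ℝ)) (by exact lt_of_lt_of_le (by norm_num) (Nat.cast_nonneg k))
  simpa [Real.rpow_natCast] using h

lemma tendsto_pow_gauss_atTop (k : ℕ) :
    Tendsto (fun x : ℝ => x ^ k * Real.exp (-x^2)) atTop (nhds 0) := by
  have h := tendsto_pow_mul_exp_neg_atTop_nhds_zero k
  rw [tendsto_zero_iff_norm_tendsto_zero]
  apply squeeze_zero_norm'
  · filter_upwards [eventually_ge_atTop (1 : ℝ)] with x hx
    have hx0 : (0:ℝ) ≤ x := by linarith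
    have : Real.exp (-x^2) ≤ Real.exp (-x) := by
      apply Real.exp_le_exp.mpr; nlinarith
    calc ‖‖x ^ k * Real.exp (-x^2)‖‖ = x ^ k * Real.exp (-x^2) := by
          rw [norm_norm, Real.norm_eq_abs, abs_of_nonneg (by positivity)]
      _ ≤ x ^ k * Real.exp (-x) := by
          exact mul_le_mul_of_nonneg_left this (by positivity)
  · exact h

lemma tendsto_pow_gauss_atBot (k : ℕ) :
    Tendsto (fun x : ℝ => x ^ k * Real.exp (-x^2)) atBot (nhds 0) := by
  have h : Tendsto (fun x : ℝ => (-x) ^ k * Real.exp (-(-x)^2)) atBot (nhds 0) :=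
    (tendsto_pow_gauss_atTop k).comp tendsto_neg_atBot_atTop
  rw [tendsto_zero_iff_norm_tendsto_zero] at h ⊢
  convert h using 2 with x
  simp [norm_mul, abs_pow, abs_neg]

lemma integral_deriv_zero {g g' : ℝ → ℝ} (hd : ∀ x, HasDerivAt g (g' x) x)
    (hi : Integrable g') (ht : Tendsto g atTop (nhds 0))
    (hb : Tendsto g atBot (nhds 0)) : ∫ x, g' x = 0 := by
  have h1 : ∫ x in Set.Ioi (0:ℝ), g' x = 0 - g 0 :=
    integral_Ioi_of_hasDerivAt_of_tendsto (hd 0).continuousAt.continuousWithinAt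
      (fun x _ => hd x) hi.integrableOn ht
  have h2 : ∫ x in Set.Iic (0:ℝ), g' x = g 0 - 0 :=
    integral_Iic_of_hasDerivAt_of_tendsto (hd 0).continuousAt.continuousWithinAt
      (fun x _ => hd x) hi.integrableOn hb
  have := intervalIntegral.integral_Iic_add_Ioi (μ := volume) (b := (0:ℝ)) hi.integrableOn hi.integrableOn
  rw [h1, h2] at this
  rw [← this]; ring

lemma hasDerivAt_gauss (x : ℝ) :
    HasDerivAt (fun x : ℝ => Real.exp (-x^2)) (Real.exp (-x^2) * (-2*x)) x := by
  have h1 : HasDerivAt (fun x : ℝ => -x^2) (-2*x) x := by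
    simpa using ((hasDerivAt_pow 2 x).fun_neg)
  exact (Real.hasDerivAt_exp (-x^2)).comp x h1

lemma hasDerivAt_pow_gauss (k : ℕ) (x : ℝ) :
    HasDerivAt (fun x : ℝ => x ^ (k+1) * Real.exp (-x^2))
      (((k:ℝ)+1) * x ^ k * Real.exp (-x^2) - 2 * (x ^ (k+2) * Real.exp (-x^2))) x := by
  have h := (hasDerivAt_pow (k+1) x).fun_mul (hasDerivAt_gauss x)
  refine h.congr_deriv ?_
  push_cast
  ring

lemma gauss_moment : ∀ (k : ℕ), (∫ x : ℝ, x ^ k * Real.exp (-x^2)) = Real.sqrt π * mG k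
  | 0 => by
      simpa [mG] using integral_gaussian 1
  | 1 => by
      have hd : ∀ x : ℝ, HasDerivAt (fun x : ℝ => -Real.exp (-x^2)/2) (x ^ 1 * Real.exp (-x^2)) x := by
        intro x
        have := (hasDerivAt_gauss x).fun_neg.div_const 2
        refine this.congr_deriv ?_
        ring
      have hi : Integrable (fun x : ℝ => x ^ 1 * Real.exp (-x^2)) := integrable_pow_gauss 1
      have ht : Tendsto (fun x : ℝ => -Real.exp (-x^2)/2) atTop (nhds 0) := by
        have := (tendsto_pow_gauss_atTop 0).neg.div_const 2
        simpa using this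
      have hb : Tendsto (fun x : ℝ => -Real.exp (-x^2)/2) atBot (nhds 0) := by
        have := (tendsto_pow_gauss_atBot 0).neg.div_const 2
        simpa using this
      rw [integral_deriv_zero hd hi ht hb, mG]
      ring
  | (k+2) => by
      have IH := gauss_moment k
      have hd := hasDerivAt_pow_gauss k
      have hi : Integrable (fun x : ℝ =>
          ((k:ℝ)+1) * x ^ k * Real.exp (-x^2) - 2 * (x ^ (k+2) * Real.exp (-x^2))) := by
        have h1 := (integrable_pow_gauss k).const_mul ((k:ℝ)+1)
        have h2 := (integrable_pow_gauss (k+2)).const_mul 2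
        simpa [mul_assoc] using h1.sub' h2
      have h0 := integral_deriv_zero hd hi (tendsto_pow_gauss_atTop (k+1))
        (tendsto_pow_gauss_atBot (k+1))
      have h1' : Integrable (fun x : ℝ => ((k:ℝ)+1) * x ^ k * Real.exp (-x^2)) := by
        simpa [mul_assoc] using (integrable_pow_gauss k).const_mul ((k:ℝ)+1)
      have h2' : Integrable (fun x : ℝ => 2 * (x ^ (k+2) * Real.exp (-x^2))) :=
        (integrable_pow_gauss (k+2)).const_mul 2
      rw [integral_sub h1' h2'] at h0
      simp_rw [mul_assoc] at h0
      rw [MeasureTheory.integral_const_mul, MeasureTheory.integral_const_mul, IH] at h0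
      rw [show mG (k+2) = ((k:ℝ)+1)/2 * mG k from rfl]
      linarith

section AuxGauss
variable {n : ℕ}

lemma euclid_norm_sq (y : EuclideanSpace ℝ (Fin n)) : ‖y‖^2 = ∑ i, (y i)^2 := by
  rw [EuclideanSpace.norm_eq, Real.sq_sqrt (by positivity)]
  exact Finset.sum_congr rfl fun i _ => by rw [Real.norm_eq_abs, sq_abs]

lemma pi_integrand_eq (p : MvPolynomial (Fin n) ℝ) (x : Fin n → ℝ) :
    eval x p * Real.exp (-∑ i, (x i)^2)
      = ∑ α ∈ p.support, coeff α p * ∏ i, ((x i)^(α i) * Real.exp (-(x i)^2)) := by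
  rw [eval_eq', Finset.sum_mul]
  refine Finset.sum_congr rfl fun α _ => ?_
  rw [mul_assoc]
  congr 1
  rw [Finset.prod_mul_distrib]
  congr 1
  rw [← Real.exp_sum]
  congr 1
  rw [← Finset.sum_neg_distrib]

lemma integrable_pi_integrand (p : MvPolynomial (Fin n) ℝ) :
    Integrable (fun x : Fin n → ℝ => eval x p * Real.exp (-∑ i, (x i)^2)) := by
  have : ∀ x : Fin n → ℝ, eval x p * Real.exp (-∑ i, (x i)^2)
      = ∑ α ∈ p.support, coeff α p * ∏ i, ((x i)^(α i) * Real.exp (-(x i)^2)) :=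
    pi_integrand_eq p
  simp_rw [this]
  apply integrable_finset_sum
  intro α _
  exact (Integrable.fintype_prod (f := fun i t => t^(α i) * Real.exp (-t^2))
    (fun i => integrable_pow_gauss (α i))).const_mul _

lemma integral_pi_integrand (p : MvPolynomial (Fin n) ℝ) :
    ∫ x : Fin n → ℝ, eval x p * Real.exp (-∑ i, (x i)^2)
      = (Real.sqrt π)^n * TG p := by
  simp_rw [pi_integrand_eq p]
  rw [integral_finset_sum _ (fun α _ =>
    (Integrable.fintype_prod (f := fun i t => t^(α i) * Real.exp (-t^2))
      (fun i => integrable_pow_gauss (α i))).const_mul _)]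
  rw [TG, Finset.mul_sum]
  refine Finset.sum_congr rfl fun α _ => ?_
  rw [MeasureTheory.integral_const_mul,
    integral_fintype_prod_volume_eq_prod (f := fun i t => t^(α i) * Real.exp (-t^2))]
  simp_rw [gauss_moment]
  rw [Finset.prod_mul_distrib, Finset.prod_const]
  simp [Finset.card_univ]
  ring

lemma comp_eq (p : MvPolynomial (Fin n) ℝ) (y : EuclideanSpace ℝ (Fin n)) :
    (fun x : Fin n → ℝ => eval x p * Real.exp (-∑ i, (x i)^2))
      (((MeasurableEquiv.toLp 2 (Fin n → ℝ)).symm) y) = evalPt p y * Real.exp (-‖y‖^2) := by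
  rw [euclid_norm_sq]
  rfl

lemma measurableEquiv_apply (y : EuclideanSpace ℝ (Fin n)) (i : Fin n) :
    ((MeasurableEquiv.toLp 2 (Fin n → ℝ)).symm) y i = y i := rfl

lemma integrable_gauss_poly (p : MvPolynomial (Fin n) ℝ) :
    Integrable (fun y : EuclideanSpace ℝ (Fin n) => evalPt p y * Real.exp (-‖y‖^2)) := by
  have mp := EuclideanSpace.volume_preserving_symm_measurableEquiv_toLp (Fin n)
  have h := (mp.integrable_comp_emb
    ((MeasurableEquiv.toLp 2 (Fin n → ℝ)).symm).measurableEmbedding).mpr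
    (integrable_pi_integrand p)
  apply h.congr
  filter_upwards with y
  exact comp_eq p y

lemma integral_gauss_poly (p : MvPolynomial (Fin n) ℝ) :
    (∫ y : EuclideanSpace ℝ (Fin n), evalPt p y * Real.exp (-‖y‖^2))
      = (Real.sqrt π)^n * TG p := by
  have mp := EuclideanSpace.volume_preserving_symm_measurableEquiv_toLp (Fin n)
  rw [← integral_pi_integrand p,
    ← mp.integral_comp ((MeasurableEquiv.toLp 2 (Fin n → ℝ)).symm).measurableEmbedding]
  exact integral_congr_ae (Filter.Eventually.of_forall fun y => (comp_eq p y).symm)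


lemma evalPt_translate (p : MvPolynomial (Fin n) ℝ) (x y : EuclideanSpace ℝ (Fin n)) :
    evalPt (translatePoly p x) y = evalPt p (y + x) := by
  rw [evalPt, translatePoly, evalPt]
  have : ∀ (g : Fin n → ℝ) (h : Fin n → MvPolynomial (Fin n) ℝ) (φ : MvPolynomial (Fin n) ℝ),
      eval g (bind₁ h φ) = eval (fun i => eval g (h i)) φ := by
    intro g h φ
    exact eval₂Hom_bind₁ (RingHom.id ℝ) g h φ
  rw [this]
  have h2 : (fun i => eval (fun i => y i) (X i + C (x i))) = fun i => (y + x) i :=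
    funext fun i => by simp [PiLp.add_apply]
  rw [h2]

lemma pderiv_translate (p : MvPolynomial (Fin n) ℝ) (x : EuclideanSpace ℝ (Fin n)) (i : Fin n) :
    pderiv i (translatePoly p x) = translatePoly (pderiv i p) x := by
  classical
  induction p using MvPolynomial.induction_on with
  | C a => simp [translatePoly]
  | add p q hp hq => simp only [translatePoly, map_add] at *; rw [hp, hq]
  | mul_X p j hp =>
      have hb : (bind₁ fun i => X i + C (x i)) (pderiv i (X j)) = pderiv i (X j) := by
        rcases eq_or_ne j i with rfl | hne
        · rw [pderiv_X_self, map_one]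
        · rw [pderiv_X_of_ne hne, map_zero]
      simp only [translatePoly] at *
      simp only [pderiv_mul, map_add, map_mul, bind₁_X_right, pderiv_C, add_zero, hp, hb]

lemma isHarmonic_translate {p : MvPolynomial (Fin n) ℝ} (hp : IsHarmonic p)
    (x : EuclideanSpace ℝ (Fin n)) : IsHarmonic (translatePoly p x) := by
  unfold IsHarmonic at *
  simp_rw [pderiv_translate, translatePoly]
  rw [← map_sum (bind₁ fun i => X i + C (x i)) (fun i => pderiv i (pderiv i p)), hp, map_zero]

lemma degree_eq_sum_univ (α : Fin n →₀ ℕ) : α.degree = ∑ i, α i := by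
  rw [Finsupp.degree]
  exact Finset.sum_subset (Finset.subset_univ _)
    (fun i _ hi => Finsupp.notMem_support_iff.mp hi)

lemma isHomogeneous_pderiv {p : MvPolynomial (Fin n) ℝ} {k : ℕ}
    (hp : p.IsHomogeneous k) (i : Fin n) : (pderiv i p).IsHomogeneous (k - 1) := by
  classical
  conv_lhs => rw [← p.support_sum_monomial_coeff]
  rw [map_sum]
  apply IsHomogeneous.sum
  intro α hα
  rw [pderiv_monomial]
  rcases eq_or_ne (α i) 0 with h0 | h0
  · rw [h0]; push_cast; rw [mul_zero]
    simpa using isHomogeneous_zero (σ := Fin n) (R := ℝ) (k - 1)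
  · apply isHomogeneous_monomial
    have hdeg : α.degree = k := by
      by_contra hne
      exact MvPolynomial.mem_support_iff.mp hα (hp.coeff_eq_zero hne)
    rw [degree_eq_sum_univ] at hdeg ⊢
    have hsub : ∀ j, ((α - Finsupp.single i 1 : Fin n →₀ ℕ)) j
        = α j - (if j = i then 1 else 0) := by
      intro j; rw [Finsupp.tsub_apply, Finsupp.single_apply]
      simp [eq_comm]
    have e1 : ∑ j, ((α - Finsupp.single i 1 : Fin n →₀ ℕ)) j
        = (α i - 1) + ∑ j ∈ Finset.univ.erase i, α j := by
      rw [← Finset.add_sum_erase _ _ (Finset.mem_univ i)]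
      congr 1
      · rw [hsub, if_pos rfl]
      · exact Finset.sum_congr rfl fun j hj => by
          rw [hsub, if_neg (Finset.mem_erase.mp hj).1, Nat.sub_zero]
    have e2 : ∑ j, α j = α i + ∑ j ∈ Finset.univ.erase i, α j :=
      (Finset.add_sum_erase _ _ (Finset.mem_univ i)).symm
    omega

lemma pderiv_eq_zero_of_isHomogeneous_zero {p : MvPolynomial (Fin n) ℝ}
    (hp : p.IsHomogeneous 0) (i : Fin n) : pderiv i p = 0 := by
  classical
  have h := (totalDegree_eq_zero_iff (Fin n) p).mp (by
    rcases eq_or_ne p 0 with rfl | hne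
    · simp
    · exact hp.totalDegree hne)
  conv_lhs => rw [← p.support_sum_monomial_coeff]
  rw [map_sum]
  apply Finset.sum_eq_zero
  intro α hα
  rw [pderiv_monomial, h α hα i]
  push_cast
  rw [mul_zero, map_zero]

lemma lap_homogeneousComponent {q : MvPolynomial (Fin n) ℝ} (hq : IsHarmonic q)
    {k : ℕ} (hk : 1 ≤ k) : IsHarmonic (homogeneousComponent k q) := by
  classical
  have comp_homog : ∀ j, (homogeneousComponent j q).IsHomogeneous j :=
    fun j => homogeneousComponent_isHomogeneous j q
  have lap_homog : ∀ j, (∑ i : Fin n, pderiv i (pderiv i (homogeneousComponent j q))).IsHomogeneous (j - 2) := by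
    intro j
    apply IsHomogeneous.sum
    intro i _
    have := isHomogeneous_pderiv (isHomogeneous_pderiv (comp_homog j) i) i
    simpa [Nat.sub_sub] using this
  have lap_small : ∀ j, j ≤ 1 → (∑ i : Fin n, pderiv i (pderiv i (homogeneousComponent j q))) = 0 := by
    intro j hj
    apply Finset.sum_eq_zero
    intro i _
    rcases Nat.le_one_iff_eq_zero_or_eq_one.mp hj with rfl | rfl
    · rw [pderiv_eq_zero_of_isHomogeneous_zero (comp_homog 0) i, map_zero]
    · have h1 : (pderiv i (homogeneousComponent 1 q)).IsHomogeneous 0 := by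
        simpa using isHomogeneous_pderiv (comp_homog 1) i
      rw [pderiv_eq_zero_of_isHomogeneous_zero h1 i]
  rcases Nat.lt_or_ge k 2 with hk2 | hk2
  · exact lap_small k (by omega)
  rcases Nat.lt_or_ge q.totalDegree k with hdk | hdk
  · unfold IsHarmonic
    rw [homogeneousComponent_eq_zero _ q hdk]
    simp
  · have hmem : k ∈ Finset.range (q.totalDegree + 1) := Finset.mem_range.mpr (by omega)
    have hlapsum : ∑ j ∈ Finset.range (q.totalDegree + 1),
        (∑ i : Fin n, pderiv i (pderiv i (homogeneousComponent j q))) = 0 := by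
      rw [Finset.sum_comm]
      have heq : ∀ i : Fin n, ∑ j ∈ Finset.range (q.totalDegree + 1),
          pderiv i (pderiv i (homogeneousComponent j q))
          = pderiv i (pderiv i q) := by
        intro i
        rw [← map_sum, ← map_sum, sum_homogeneousComponent]
      rw [Finset.sum_congr rfl fun i _ => heq i]
      exact hq
    have h0 := congrArg (homogeneousComponent (k - 2)) hlapsum
    rw [map_sum, map_zero] at h0
    have hsingle := Finset.sum_eq_single_of_mem
      (f := fun j => homogeneousComponent (k - 2)
        (∑ i : Fin n, pderiv i (pderiv i (homogeneousComponent j q))))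
      k hmem (by
        intro j hj hjk
        rcases Nat.lt_or_ge j 2 with hj2 | hj2
        · rw [lap_small j (by omega), map_zero]
        · rw [homogeneousComponent_of_mem ((mem_homogeneousSubmodule _ _).mpr (lap_homog j)),
            if_neg (by omega)])
    rw [hsingle] at h0
    unfold IsHarmonic
    rw [← h0,
      homogeneousComponent_of_mem ((mem_homogeneousSubmodule _ _).mpr (lap_homog k)), if_pos rfl]


lemma continuous_evalPt (p : MvPolynomial (Fin n) ℝ) : Continuous (evalPt p) := by
  have h1 : Continuous fun y : EuclideanSpace ℝ (Fin n) => (fun i => y i : Fin n → ℝ) :=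
    continuous_pi fun i => (EuclideanSpace.proj i : EuclideanSpace ℝ (Fin n) →L[ℝ] ℝ).continuous
  exact (MvPolynomial.continuous_eval (p := p)).comp h1

lemma evalPt_smul_homog {P : MvPolynomial (Fin n) ℝ} {k : ℕ} (hom : P.IsHomogeneous k)
    (t : ℝ) (y : EuclideanSpace ℝ (Fin n)) : evalPt P (t • y) = t ^ k * evalPt P y := by
  have hcoord : (fun i => (t • y) i : Fin n → ℝ) = fun i => t * y i := rfl
  rw [evalPt, evalPt, hcoord, eval_eq', eval_eq', Finset.mul_sum]
  refine Finset.sum_congr rfl fun α hα => ?_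
  have hdeg : ∑ i, α i = k := by
    have h1 : α.degree = k := by
      by_contra hne
      exact MvPolynomial.mem_support_iff.mp hα (hom.coeff_eq_zero hne)
    rw [← h1, Finsupp.degree]
    exact (Finset.sum_subset (Finset.subset_univ _)
      (fun i _ hi => Finsupp.notMem_support_iff.mp hi)).symm
  calc coeff α P * ∏ i, (t * y i) ^ α i
      = coeff α P * ((∏ i, t ^ α i) * ∏ i, (y i) ^ α i) := by
        rw [← Finset.prod_mul_distrib]; simp_rw [mul_pow]
    _ = t ^ k * (coeff α P * ∏ i, (y i) ^ α i) := by
        rw [Finset.prod_pow_eq_pow_sum, hdeg]; ring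

lemma harmonic_homog_nonneg_eq_zero {k : ℕ} (P : MvPolynomial (Fin n) ℝ)
    (hh : IsHarmonic P) (hom : P.IsHomogeneous k) (hk : k ≠ 0)
    (hge : ∀ y : EuclideanSpace ℝ (Fin n), 0 ≤ evalPt P y) : P = 0 := by
  have hT : TG P = 0 := TG_eq_zero_of_harmonic_homogeneous P hh hom hk
  have hint : (∫ y : EuclideanSpace ℝ (Fin n), evalPt P y * Real.exp (-‖y‖^2)) = 0 := by
    rw [integral_gauss_poly, hT, mul_zero]
  have hnonneg : (0 : EuclideanSpace ℝ (Fin n) → ℝ)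
      ≤ fun y => evalPt P y * Real.exp (-‖y‖^2) :=
    fun y => mul_nonneg (hge y) (Real.exp_nonneg _)
  have hae := (MeasureTheory.integral_eq_zero_iff_of_nonneg hnonneg
    (integrable_gauss_poly P)).mp hint
  have hcont : Continuous fun y : EuclideanSpace ℝ (Fin n) => evalPt P y * Real.exp (-‖y‖^2) :=
    (continuous_evalPt P).mul ((Real.continuous_exp).comp (continuous_norm.pow 2).neg)
  have heq : (fun y : EuclideanSpace ℝ (Fin n) => evalPt P y * Real.exp (-‖y‖^2)) = 0 :=
    (Continuous.ae_eq_iff_eq volume hcont continuous_const).mp hae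
  have hz : ∀ y : EuclideanSpace ℝ (Fin n), evalPt P y = 0 := by
    intro y
    have := congrFun heq y
    simp only [Pi.zero_apply] at this
    have hexp : Real.exp (-‖y‖^2) ≠ 0 := Real.exp_ne_zero _
    exact (mul_eq_zero.mp this).resolve_right hexp
  apply MvPolynomial.funext
  intro x
  have := hz ((WithLp.equiv 2 (Fin n → ℝ)).symm x)
  rw [evalPt] at this
  simpa using this

lemma not_nonneg_on_ball {h : MvPolynomial (Fin n) ℝ} (hh : IsHarmonic h)
    (hnc : h.totalDegree ≠ 0) {x : EuclideanSpace ℝ (Fin n)} (hx : evalPt h x = 0)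
    {ε : ℝ} (hε : 0 < ε) (hnn : ∀ y ∈ Metric.ball x ε, 0 ≤ evalPt h y) : False := by
  classical
  set q := translatePoly h x with hqdef
  have hq : IsHarmonic q := isHarmonic_translate hh x
  have hq0 : evalPt q 0 = 0 := by rw [hqdef, evalPt_translate, zero_add, hx]
  have hcoeff0 : coeff 0 q = 0 := by
    have : evalPt q 0 = coeff 0 q := by
      rw [evalPt]
      have : (fun i => (0 : EuclideanSpace ℝ (Fin n)) i) = (0 : Fin n → ℝ) := rfl
      rw [this, eval_zero]
      rfl
    rw [← this, hq0]
  have hqball : ∀ z : EuclideanSpace ℝ (Fin n), ‖z‖ < ε → 0 ≤ evalPt q z := by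
    intro z hz
    rw [hqdef, evalPt_translate]
    apply hnn
    rw [Metric.mem_ball, dist_eq_norm, add_sub_cancel_right]
    exact hz
  have hcomp0 : homogeneousComponent 0 q = 0 := by
    rw [homogeneousComponent_zero, hcoeff0, map_zero]
  -- existence of a nonzero component of positive degree
  have hex : ∃ j, 1 ≤ j ∧ homogeneousComponent j q ≠ 0 := by
    by_contra hcon
    push_neg at hcon
    have hqzero : q = 0 := by
      have hsum := sum_homogeneousComponent q
      rw [Finset.sum_eq_zero] at hsum
      · exact hsum.symm
      · intro j hj
        rcases Nat.eq_zero_or_pos j with rfl | hj1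
        · exact hcomp0
        · exact hcon j hj1
    have hzero : ∀ y : EuclideanSpace ℝ (Fin n), evalPt h y = 0 := by
      intro y
      have : evalPt q (y - x) = evalPt h y := by
        rw [hqdef, evalPt_translate, sub_add_cancel]
      rw [← this, hqzero]
      simp [evalPt]
    have : h = 0 := by
      apply MvPolynomial.funext
      intro r
      have := hzero ((WithLp.equiv 2 (Fin n → ℝ)).symm r)
      rw [evalPt] at this
      simpa using this
    rw [this] at hnc
    simp at hnc
  -- minimal such k
  let k := Nat.find hex
  obtain ⟨hk1, hkne⟩ : 1 ≤ k ∧ homogeneousComponent k q ≠ 0 := Nat.find_spec hex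
  have hlow : ∀ j, j < k → homogeneousComponent j q = 0 := by
    intro j hj
    rcases Nat.eq_zero_or_pos j with rfl | hj1
    · exact hcomp0
    · by_contra hne
      exact (Nat.find_min hex hj) ⟨hj1, hne⟩
  have hk_le : k ≤ q.totalDegree := by
    by_contra hcon
    exact hkne (homogeneousComponent_eq_zero _ q (by omega))
  set P := homogeneousComponent k q with hPdef
  have hPharm : IsHarmonic P := lap_homogeneousComponent hq hk1
  have hPhom : P.IsHomogeneous k := homogeneousComponent_isHomogeneous k q
  -- P is nonnegative everywhere
  have hPge : ∀ y : EuclideanSpace ℝ (Fin n), 0 ≤ evalPt P y := by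
    intro y
    set d := q.totalDegree with hd
    set c : ℕ → ℝ := fun j => evalPt (homogeneousComponent j q) y with hc
    have hqt : ∀ t : ℝ, evalPt q (t • y) = ∑ j ∈ Finset.range (d + 1), t ^ j * c j := by
      intro t
      conv_lhs => rw [← sum_homogeneousComponent q]
      rw [evalPt, map_sum]
      refine Finset.sum_congr rfl fun j _ => ?_
      have := evalPt_smul_homog (homogeneousComponent_isHomogeneous j q) t y
      rw [evalPt] at this
      exact this
    set g : ℝ → ℝ := fun t => ∑ j ∈ Finset.range (d + 1), t ^ (j - k) * c j with hg
    have hcz : ∀ j, j < k → c j = 0 := by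
      intro j hj; simp only [hc]; rw [hlow j hj]; simp [evalPt]
    have hqg : ∀ t : ℝ, evalPt q (t • y) = t ^ k * g t := by
      intro t
      rw [hqt]; simp only [hg]; rw [Finset.mul_sum]
      refine Finset.sum_congr rfl fun j hj => ?_
      rcases Nat.lt_or_ge j k with hjk | hjk
      · rw [hcz j hjk, mul_zero, mul_zero, mul_zero]
      · rw [← mul_assoc, ← pow_add]
        congr 2
        omega
    have hgcont : Continuous g := by
      apply continuous_finset_sum
      intro j _
      exact (continuous_pow _).mul continuous_const
    have hg0 : g 0 = c k := by
      simp only [hg]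
      rw [Finset.sum_eq_single_of_mem k (Finset.mem_range.mpr (by omega))]
      · simp
      · intro j hj hjk
        rcases Nat.lt_or_ge j k with h1 | h1
        · rw [hcz j h1, mul_zero]
        · have : j - k ≠ 0 := by omega
          rw [zero_pow this, zero_mul]
    have hgpos : ∀ t : ℝ, 0 < t → t < ε / (‖y‖ + 1) → 0 ≤ g t := by
      intro t ht htε
      have hny : (0:ℝ) ≤ ‖y‖ := norm_nonneg y
      have hball : ‖t • y‖ < ε := by
        rw [norm_smul, Real.norm_eq_abs, abs_of_pos ht]
        calc t * ‖y‖ ≤ t * (‖y‖ + 1) := by nlinarith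
          _ < ε := (lt_div_iff₀ (by positivity)).mp htε
      have := hqball (t • y) hball
      rw [hqg t] at this
      exact (mul_nonneg_iff_of_pos_left (pow_pos ht k)).mp this
    have hck : 0 ≤ c k := by
      rw [← hg0]
      have htend : Tendsto g (nhdsWithin 0 (Set.Ioi 0)) (nhds (g 0)) :=
        hgcont.continuousAt.continuousWithinAt
      refine ge_of_tendsto htend ?_
      have hmem : Set.Ioo (0:ℝ) (ε / (‖y‖ + 1)) ∈ nhdsWithin 0 (Set.Ioi 0) :=
        Ioo_mem_nhdsGT_of_mem (by constructor <;> [rfl; positivity])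
      filter_upwards [hmem] with t ht
      exact hgpos t ht.1 ht.2
    exact hck
  exact hkne (harmonic_homog_nonneg_eq_zero P hPharm hPhom (by omega) hPge)

lemma exists_neg_value {h : MvPolynomial (Fin n) ℝ} (hh : IsHarmonic h)
    (hnc : h.totalDegree ≠ 0) {x : EuclideanSpace ℝ (Fin n)} (hx : evalPt h x = 0)
    {ε : ℝ} (hε : 0 < ε) : ∃ y ∈ Metric.ball x ε, evalPt h y < 0 := by
  by_contra hcon
  push_neg at hcon
  exact not_nonneg_on_ball hh hnc hx hε hcon

lemma isHarmonic_neg {h : MvPolynomial (Fin n) ℝ} (hh : IsHarmonic h) : IsHarmonic (-h) := by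
  unfold IsHarmonic at *
  simp only [map_neg, Finset.sum_neg_distrib, hh, neg_zero]

lemma exists_pos_value {h : MvPolynomial (Fin n) ℝ} (hh : IsHarmonic h)
    (hnc : h.totalDegree ≠ 0) {x : EuclideanSpace ℝ (Fin n)} (hx : evalPt h x = 0)
    {ε : ℝ} (hε : 0 < ε) : ∃ y ∈ Metric.ball x ε, 0 < evalPt h y := by
  have h1 : (-h).totalDegree ≠ 0 := by rwa [totalDegree_neg]
  have h2 : evalPt (-h) x = 0 := by rw [evalPt, map_neg, ← evalPt, hx, neg_zero]
  obtain ⟨y, hy, hval⟩ := exists_neg_value (isHarmonic_neg hh) h1 h2 hε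
  refine ⟨y, hy, ?_⟩
  rw [evalPt, map_neg, ← evalPt] at hval
  linarith


end AuxGauss

/-- If Σ_{hⁱ} ∩ B converges in the Hausdorff distance to a closed set F ⊆ B, then
F ⊆ Σ_h ∩ B and F ∩ int B = Σ_h ∩ int B. -/
theorem zeroSet_limit_subset {n : ℕ} (hs : ℕ → MvPolynomial (Fin n) ℝ)
    (h : MvPolynomial (Fin n) ℝ) (hharm : ∀ i, IsHarmonic (hs i)) (hh : IsHarmonic h)
    (hnc : h.totalDegree ≠ 0)
    (hconv : ∀ K : Set (EuclideanSpace ℝ (Fin n)), IsCompact K →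
      TendstoUniformlyOn (fun i y => evalPt (hs i) y) (fun y => evalPt h y)
        Filter.atTop K)
    (c : EuclideanSpace ℝ (Fin n)) (R : ℝ)
    (hB : (zeroSet h ∩ interior (Metric.closedBall c R)).Nonempty)
    (F : Set (EuclideanSpace ℝ (Fin n))) (hF : IsClosed F)
    (hFB : F ⊆ Metric.closedBall c R)
    (hlim : Filter.Tendsto
      (fun i => EMetric.hausdorffEdist (zeroSet (hs i) ∩ Metric.closedBall c R) F)
      Filter.atTop (nhds 0)) :
    F ⊆ zeroSet h ∩ Metric.closedBall c R ∧
      F ∩ interior (Metric.closedBall c R)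
        = zeroSet h ∩ interior (Metric.closedBall c R) := by
  have hBcompact : IsCompact (Metric.closedBall c R) := isCompact_closedBall c R
  have huc := hconv _ hBcompact
  rw [Metric.tendstoUniformlyOn_iff] at huc
  -- Part 1 : F ⊆ zeroSet h ∩ B
  have part1 : F ⊆ zeroSet h ∩ Metric.closedBall c R := by
    intro y hy
    refine ⟨?_, hFB hy⟩
    by_contra hy0
    set a := |evalPt h y| with ha
    have hapos : 0 < a := abs_pos.mpr hy0
    -- continuity of evalPt h at y
    have hcont := (continuous_evalPt h).continuousAt (x := y)
    rw [Metric.continuousAt_iff] at hcont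
    obtain ⟨r, hr, hrprop⟩ := hcont (a / 3) (by linarith)
    -- eventual closeness
    have hev1 : ∀ᶠ i in Filter.atTop,
        ∀ z ∈ Metric.closedBall c R, dist (evalPt h z) (evalPt (hs i) z) < a / 3 :=
      huc (a / 3) (by linarith)
    have hev2 : ∀ᶠ i in Filter.atTop,
        EMetric.hausdorffEdist (zeroSet (hs i) ∩ Metric.closedBall c R) F
          < ENNReal.ofReal r := by
      apply hlim.eventually_lt_const
      simp [ENNReal.ofReal_pos, hr]
    obtain ⟨i, h1, h2⟩ := (hev1.and hev2).exists
    -- find a zero of hs i near y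
    have hinf : EMetric.infEdist y (zeroSet (hs i) ∩ Metric.closedBall c R)
        < ENNReal.ofReal r := by
      calc EMetric.infEdist y (zeroSet (hs i) ∩ Metric.closedBall c R)
          ≤ EMetric.hausdorffEdist F (zeroSet (hs i) ∩ Metric.closedBall c R) :=
            EMetric.infEdist_le_hausdorffEdist_of_mem hy
        _ = EMetric.hausdorffEdist (zeroSet (hs i) ∩ Metric.closedBall c R) F :=
            EMetric.hausdorffEdist_comm
        _ < ENNReal.ofReal r := h2
    obtain ⟨z, hz, hzy⟩ := EMetric.infEdist_lt_iff.mp hinf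
    rw [edist_lt_ofReal] at hzy
    have hz0 : evalPt (hs i) z = 0 := hz.1
    have hzB : z ∈ Metric.closedBall c R := hz.2
    have e1 : |evalPt h z - evalPt h y| < a / 3 := by
      have := hrprop (show dist z y < r by rwa [dist_comm])
      rwa [Real.dist_eq] at this
    have e2 : |evalPt h z - evalPt (hs i) z| < a / 3 := by
      have := h1 z hzB
      rwa [Real.dist_eq] at this
    rw [hz0, sub_zero] at e2
    have : a ≤ |evalPt h y - evalPt h z| + |evalPt h z| := by
      rw [ha]
      calc |evalPt h y| = |(evalPt h y - evalPt h z) + evalPt h z| := by ring_nf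
        _ ≤ |evalPt h y - evalPt h z| + |evalPt h z| := abs_add_le _ _
    rw [abs_sub_comm] at this
    linarith
  refine ⟨part1, ?_⟩
  ext z
  constructor
  · rintro ⟨hzF, hzint⟩
    exact ⟨(part1 hzF).1, hzint⟩
  · rintro ⟨hz0, hzint⟩
    refine ⟨?_, hzint⟩
    -- z is in the closure of F
    rw [← hF.closure_eq]
    rw [Metric.mem_closure_iff]
    intro ε hε
    -- find ρ with ball z ρ ⊆ interior B and ρ ≤ ε/2
    obtain ⟨ρ0, hρ0, hρ0sub⟩ := Metric.isOpen_iff.mp isOpen_interior z hzint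
    set ρ := min ρ0 (ε / 2) with hρdef
    have hρpos : 0 < ρ := lt_min hρ0 (by linarith)
    have hρsub : Metric.ball z ρ ⊆ interior (Metric.closedBall c R) :=
      (Metric.ball_subset_ball (min_le_left _ _)).trans hρ0sub
    have hρε : ρ ≤ ε / 2 := min_le_right _ _
    -- sign change in ball z (ρ/2)
    obtain ⟨a, haball, hapos⟩ := exists_pos_value hh hnc hz0 (show 0 < ρ / 2 by linarith)
    obtain ⟨b, hbball, hbneg⟩ := exists_neg_value hh hnc hz0 (show 0 < ρ / 2 by linarith)
    set m := min (evalPt h a) (-(evalPt h b)) with hm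
    have hmpos : 0 < m := lt_min hapos (by linarith)
    have hev1 : ∀ᶠ i in Filter.atTop,
        ∀ w ∈ Metric.closedBall c R, dist (evalPt h w) (evalPt (hs i) w) < m :=
      huc m hmpos
    have hev2 : ∀ᶠ i in Filter.atTop,
        EMetric.hausdorffEdist (zeroSet (hs i) ∩ Metric.closedBall c R) F
          < ENNReal.ofReal (ε / 2) := by
      apply hlim.eventually_lt_const
      simp [ENNReal.ofReal_pos]
      linarith
    obtain ⟨i, h1, h2⟩ := (hev1.and hev2).exists
    have hball2B : Metric.ball z (ρ / 2) ⊆ Metric.closedBall c R := fun w hw =>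
      interior_subset (hρsub (Metric.ball_subset_ball (by linarith) hw))
    -- hs i is positive at a, negative at b
    have hia : 0 < evalPt (hs i) a := by
      have := h1 a (hball2B haball)
      rw [Real.dist_eq] at this
      have hma : m ≤ evalPt h a := min_le_left _ _
      cases abs_lt.mp this with
      | intro l r => linarith
    have hib : evalPt (hs i) b < 0 := by
      have := h1 b (hball2B hbball)
      rw [Real.dist_eq] at this
      have hmb : m ≤ -evalPt h b := min_le_right _ _
      cases abs_lt.mp this with
      | intro l r => linarith
    -- intermediate value theorem on the ball
    have hconn : IsPreconnected (Metric.ball z (ρ / 2)) :=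
      (convex_ball z (ρ / 2)).isPreconnected
    have hivt := hconn.intermediate_value hbball haball
      ((continuous_evalPt (hs i)).continuousOn)
    have h0mem : (0 : ℝ) ∈ Set.Icc (evalPt (hs i) b) (evalPt (hs i) a) :=
      ⟨le_of_lt hib, le_of_lt hia⟩
    obtain ⟨w, hwball, hw0⟩ := hivt h0mem
    -- w is a zero of hs i in B, close to z
    have hwmem : w ∈ zeroSet (hs i) ∩ Metric.closedBall c R :=
      ⟨hw0, hball2B hwball⟩
    have hinf : EMetric.infEdist w F < ENNReal.ofReal (ε / 2) :=
      lt_of_le_of_lt (EMetric.infEdist_le_hausdorffEdist_of_mem hwmem) h2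
    obtain ⟨f, hfF, hwf⟩ := EMetric.infEdist_lt_iff.mp hinf
    rw [edist_lt_ofReal] at hwf
    refine ⟨f, hfF, ?_⟩
    have hzw : dist z w < ρ / 2 := by
      have := Metric.mem_ball.mp hwball
      rwa [dist_comm]
    calc dist z f ≤ dist z w + dist w f := dist_triangle _ _ _
      _ < ρ / 2 + ε / 2 := by exact add_lt_add hzw hwf
      _ ≤ ε / 2 / 2 + ε / 2 := by linarith
      _ < ε := by linarith
end

section
/- Tacnode example: for p(x,y) = x⁴ + y⁴ − y² on ℝ², the origin belongs to Σ_p with Dp(0) = 0, yet the origin is a flat point of Σ_p, i.e. θ_{Σ_p}(0,r) → 0 as r → 0. Hence for general (non-harmonic) polynomials, flat points of the zero set need not be regular points. -/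
open MvPolynomial Metric Filter
open scoped ENNReal

section TacnodeAux


lemma keyA {r X Y : ℝ} (hr2 : r ≤ 1/2) (h : X^4 + Y^4 - Y^2 = 0)
    (hX : |X| ≤ r) (hY : |Y| ≤ r) : Y^2 ≤ 9 * r^4 := by
  have hXsq : X^2 ≤ r^2 := by nlinarith [sq_abs X, mul_self_le_mul_self (abs_nonneg X) hX]
  have hYsq : Y^2 ≤ r^2 := by nlinarith [sq_abs Y, mul_self_le_mul_self (abs_nonneg Y) hY]
  have hr0 : (0:ℝ) ≤ r := le_trans (abs_nonneg X) hX
  have hrsq : r^2 ≤ 1/4 := by nlinarith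
  have hX4 : X^4 ≤ r^4 := by nlinarith [sq_nonneg X]
  have hY4 : Y^4 ≤ Y^2 * (1/4) := by nlinarith [sq_nonneg Y]
  nlinarith [sq_nonneg r]

set_option maxHeartbeats 1000000 in
lemma keyB {r x : ℝ} (hr : 0 < r) (hr2 : r ≤ 1/2) (hx : |x| ≤ r) :
    ∃ x' y' : ℝ, x'^4 + y'^4 - y'^2 = 0 ∧ x'^2 + y'^2 ≤ r^2 ∧
      (x - x')^2 + y'^2 ≤ 9 * r^4 := by
  have hxsq : x^2 ≤ r^2 := by nlinarith [sq_abs x, mul_self_le_mul_self (abs_nonneg x) hx]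
  have hrsq : r^2 ≤ 1/4 := by nlinarith
  have hx4 : x^4 ≤ r^4 := by nlinarith [sq_nonneg x]
  obtain ⟨c, hcdef⟩ : ∃ c : ℝ, c = 1 - 2*r^2 := ⟨_, rfl⟩
  have hc0 : 0 < c := by rw [hcdef]; nlinarith
  have hc1 : c ≤ 1 := by rw [hcdef]; nlinarith
  have hcsq : c^2 ≤ 1 := by nlinarith
  obtain ⟨x', hx'def⟩ : ∃ t : ℝ, t = c * x := ⟨_, rfl⟩
  have hx'sq : x'^2 ≤ r^2 := by
    rw [hx'def]
    calc (c*x)^2 = c^2 * x^2 := by ring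
    _ ≤ 1 * r^2 := mul_le_mul hcsq hxsq (sq_nonneg x) one_pos.le
    _ = r^2 := one_mul _
  have hx'4 : x'^4 ≤ r^4 := by nlinarith [sq_nonneg x', sq_nonneg r]
  have h4a : 4 * x'^4 ≤ 1 := by nlinarith [sq_nonneg x']
  have ha0 : (0:ℝ) ≤ x'^4 := by positivity
  obtain ⟨s, hsdef⟩ : ∃ s : ℝ, s = Real.sqrt (1 - 4 * x'^4) := ⟨_, rfl⟩
  have hs_sq : s^2 = 1 - 4*x'^4 := by rw [hsdef]; exact Real.sq_sqrt (by linarith)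
  have hs0 : 0 ≤ s := hsdef ▸ Real.sqrt_nonneg _
  have hs1 : s ≤ 1 := by nlinarith
  have hs_ge : 1 - 4*x'^4 ≤ s := by nlinarith
  obtain ⟨y', hy'def⟩ : ∃ y' : ℝ, y' = Real.sqrt ((1-s)/2) := ⟨_, rfl⟩
  have hy'_sq : y'^2 = (1-s)/2 := by rw [hy'def]; exact Real.sq_sqrt (by linarith)
  have hu2a : y'^2 ≤ 2 * x'^4 := by nlinarith
  refine ⟨x', y', ?_, ?_, ?_⟩
  · have h4 : y'^4 = ((1-s)/2)^2 := by rw [show y'^4 = (y'^2)^2 by ring, hy'_sq]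
    rw [h4, hy'_sq]
    linear_combination (1/4) * hs_sq
  · have hA : x'^2 ≤ c^2 * x^2 := by rw [hx'def]; ring_nf; rfl
    have hc4 : c^4 ≤ c^2 := by nlinarith [sq_nonneg c]
    have hB : x'^4 ≤ c^2 * x^4 := by
      rw [show x'^4 = c^4 * x^4 from by rw [hx'def]; ring]
      exact mul_le_mul_of_nonneg_right hc4 (by positivity)
    have e1 : c^2*x^4 ≤ c^2*x^2*r^2 := by
      calc c^2*x^4 = (c^2*x^2)*x^2 := by ring
      _ ≤ (c^2*x^2)*r^2 := mul_le_mul_of_nonneg_left hxsq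
            (mul_nonneg (sq_nonneg c) (sq_nonneg x))
      _ = c^2*x^2*r^2 := by ring
    have e2 : c^2*x^2 ≤ c^2*r^2 := mul_le_mul_of_nonneg_left hxsq (sq_nonneg c)
    have e2' : c^2*x^2*r^2 ≤ c^2*r^2*r^2 := mul_le_mul_of_nonneg_right e2 (sq_nonneg r)
    have h6 : r^4 * r^2 ≤ r^4 * (1/4) := mul_le_mul_of_nonneg_left hrsq (by positivity)
    have h6' : r^6 ≤ r^4/4 := by
      calc r^6 = r^4*r^2 := by ring
      _ ≤ r^4*(1/4) := h6
      _ = r^4/4 := by ring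
    have e3 : c^2*(1+2*r^2) ≤ 1 := by
      rw [hcdef,
        show (1-2*r^2)^2*(1+2*r^2) = 1 - 2*r^2 - 4*r^4 + 8*r^6 from by ring]
      linarith [sq_nonneg r, sq_nonneg (r^2)]
    have e4 : r^2*(c^2*(1+2*r^2)) ≤ r^2*1 := mul_le_mul_of_nonneg_left e3 (sq_nonneg r)
    have : x'^2 + y'^2 ≤ r^2*(c^2*(1+2*r^2)) := by nlinarith [hA, hB, e1, e2, e2', hu2a]
    calc x'^2 + y'^2 ≤ r^2*(c^2*(1+2*r^2)) := this
    _ ≤ r^2*1 := e4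
    _ = r^2 := mul_one _
  · have hxx' : (x - x')^2 = 4 * r^4 * x^2 := by rw [hx'def, hcdef]; ring
    have hq : r^4 * x^2 ≤ r^4 * (1/4) :=
      mul_le_mul_of_nonneg_left (le_trans hxsq hrsq) (by positivity)
    have h1 : (x - x')^2 ≤ r^4 := by rw [hxx']; linarith
    have h2 : y'^2 ≤ 2 * r^4 := by linarith
    nlinarith [sq_nonneg r, pow_nonneg (le_of_lt hr) 4]


/-- point constructor for the plane -/
noncomputable def pt2 (a b : ℝ) : EuclideanSpace ℝ (Fin 2) :=
  (WithLp.equiv 2 (Fin 2 → ℝ)).symm ![a, b]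

lemma pt2_zero (a b : ℝ) : pt2 a b 0 = a := rfl
lemma pt2_one (a b : ℝ) : pt2 a b 1 = b := rfl

noncomputable def e₀ : EuclideanSpace ℝ (Fin 2) := EuclideanSpace.single 0 1

lemma pt2_mem_span (a : ℝ) : pt2 a 0 ∈ Submodule.span ℝ {e₀} := by
  rw [Submodule.mem_span_singleton]
  refine ⟨a, PiLp.ext fun i => ?_⟩
  fin_cases i <;>
    simp [e₀, pt2, EuclideanSpace.single_apply, PiLp.smul_apply, WithLp.equiv_symm_apply]

lemma dist_pt2 (z : EuclideanSpace ℝ (Fin 2)) (a b : ℝ) :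
    dist z (pt2 a b) = Real.sqrt ((z 0 - a)^2 + (z 1 - b)^2) := by
  rw [EuclideanSpace.dist_eq, Fin.sum_univ_two]
  simp [pt2_zero, pt2_one, Real.dist_eq, sq_abs]

lemma norm_sq_two (z : EuclideanSpace ℝ (Fin 2)) :
    ‖z‖ = Real.sqrt ((z 0)^2 + (z 1)^2) := by
  rw [EuclideanSpace.norm_eq, Fin.sum_univ_two]
  simp [sq_abs]

lemma coord_le_norm (z : EuclideanSpace ℝ (Fin 2)) (i : Fin 2) : |z i| ≤ ‖z‖ := by
  rw [norm_sq_two, ← Real.sqrt_sq_eq_abs]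
  apply Real.sqrt_le_sqrt
  fin_cases i <;> simp <;> nlinarith [sq_nonneg (z 0), sq_nonneg (z 1)]

lemma eval_tacnode (y : EuclideanSpace ℝ (Fin 2)) :
    evalPt (MvPolynomial.X 0 ^ 4 + MvPolynomial.X 1 ^ 4 - MvPolynomial.X 1 ^ 2 :
      MvPolynomial (Fin 2) ℝ) y = (y 0)^4 + (y 1)^4 - (y 1)^2 := by
  simp [evalPt]

lemma sqrt_nine_r4 {r : ℝ} (hr : 0 ≤ r) : Real.sqrt (9 * r^4) = 3 * r^2 := by
  rw [show (9:ℝ) * r^4 = (3*r^2)^2 from by ring]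
  exact Real.sqrt_sq (by positivity)

lemma haus_bound {r : ℝ} (hr : 0 < r) (hr2 : r ≤ 1/2) :
    hausdorffDist
      (zeroSet (MvPolynomial.X 0 ^ 4 + MvPolynomial.X 1 ^ 4 - MvPolynomial.X 1 ^ 2 :
        MvPolynomial (Fin 2) ℝ) ∩ closedBall 0 r)
      (((Submodule.span ℝ {e₀} : Submodule ℝ (EuclideanSpace ℝ (Fin 2))) :
        Set (EuclideanSpace ℝ (Fin 2))) ∩ closedBall 0 r)
      ≤ 3 * r^2 := by
  apply hausdorffDist_le_of_mem_dist (by positivity)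
  · rintro z ⟨hz, hzB⟩
    have hz' : (z 0)^4 + (z 1)^4 - (z 1)^2 = 0 := by
      have := hz
      rw [zeroSet, Set.mem_setOf_eq, eval_tacnode] at this
      exact this
    have hznorm : ‖z‖ ≤ r := mem_closedBall_zero_iff.mp hzB
    have hx : |z 0| ≤ r := le_trans (coord_le_norm z 0) hznorm
    have hy : |z 1| ≤ r := le_trans (coord_le_norm z 1) hznorm
    refine ⟨pt2 (z 0) 0, ⟨pt2_mem_span _, ?_⟩, ?_⟩
    · rw [mem_closedBall_zero_iff, norm_sq_two, pt2_zero, pt2_one]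
      have : Real.sqrt ((z 0)^2 + 0^2) = |z 0| := by
        simpa using Real.sqrt_sq_eq_abs (z 0)
      rw [this]
      exact hx
    · rw [dist_pt2]
      have hkey : (z 1)^2 ≤ 9 * r^4 := keyA hr2 hz' hx hy
      calc Real.sqrt ((z 0 - z 0)^2 + (z 1 - 0)^2)
          ≤ Real.sqrt (9 * r^4) := Real.sqrt_le_sqrt (by nlinarith)
        _ = 3 * r^2 := sqrt_nine_r4 hr.le
  · rintro w ⟨hw, hwB⟩
    obtain ⟨a, ha⟩ := Submodule.mem_span_singleton.mp hw
    have hw1 : w 1 = 0 := by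
      rw [← ha]; simp [e₀, PiLp.smul_apply, EuclideanSpace.single_apply]
    have hx : |w 0| ≤ r := le_trans (coord_le_norm w 0) (mem_closedBall_zero_iff.mp hwB)
    obtain ⟨x', y', hzero, hball, hdist⟩ := keyB hr hr2 hx
    refine ⟨pt2 x' y', ⟨?_, ?_⟩, ?_⟩
    · rw [zeroSet, Set.mem_setOf_eq, eval_tacnode, pt2_zero, pt2_one]
      exact hzero
    · rw [mem_closedBall_zero_iff, norm_sq_two, pt2_zero, pt2_one]
      calc Real.sqrt (x'^2 + y'^2) ≤ Real.sqrt (r^2) := Real.sqrt_le_sqrt hball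
        _ = r := Real.sqrt_sq hr.le
    · rw [dist_pt2, hw1]
      calc Real.sqrt ((w 0 - x')^2 + (0 - y')^2)
          ≤ Real.sqrt (9 * r^4) := Real.sqrt_le_sqrt (by nlinarith)
        _ = 3 * r^2 := sqrt_nine_r4 hr.le

lemma e₀_ne_zero : (e₀ : EuclideanSpace ℝ (Fin 2)) ≠ 0 := by
  have h : ‖(e₀ : EuclideanSpace ℝ (Fin 2))‖ = 1 := by
    rw [e₀, EuclideanSpace.norm_single]; norm_num
  intro hc
  rw [hc, norm_zero] at h
  norm_num at h

end TacnodeAux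

/-- Tacnode example: the origin is a singular point of p(x,y) = x⁴ + y⁴ − y², yet it is a
flat point of the zero set. -/
theorem tacnode_flat_singular :
    let p : MvPolynomial (Fin 2) ℝ :=
      MvPolynomial.X 0 ^ 4 + MvPolynomial.X 1 ^ 4 - MvPolynomial.X 1 ^ 2
    evalPt p 0 = 0 ∧ (¬ gradNeZero p 0) ∧
      Filter.Tendsto (fun r => flatness (zeroSet p) 0 r)
        (nhdsWithin 0 (Set.Ioi 0)) (nhds 0) := by
  refine ⟨by simp [evalPt], ?_, ?_⟩
  · rintro ⟨i, hi⟩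
    apply hi
    fin_cases i <;> simp [pderiv_pow, pderiv_X]
  · have hline : Module.finrank ℝ
        (Submodule.span ℝ {e₀} : Submodule ℝ (EuclideanSpace ℝ (Fin 2))) = 2 - 1 := by
      rw [finrank_span_singleton e₀_ne_zero]
    apply squeeze_zero' (g := fun r => 3 * r)
    · filter_upwards [self_mem_nhdsWithin] with r hr
      have hr' : 0 < r := hr
      rw [flatness]
      exact mul_nonneg (one_div_nonneg.mpr hr'.le)
        (Real.iInf_nonneg fun L => Metric.hausdorffDist_nonneg)
    · filter_upwards [Ioo_mem_nhdsGT_of_mem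
        (Set.mem_Ico.mpr ⟨le_refl (0:ℝ), (by norm_num : (0:ℝ) < 1/2)⟩)] with r hr
      obtain ⟨hr0, hr12⟩ := hr
      have hH : Metric.hausdorffDist
          (zeroSet (MvPolynomial.X 0 ^ 4 + MvPolynomial.X 1 ^ 4 - MvPolynomial.X 1 ^ 2 :
            MvPolynomial (Fin 2) ℝ) ∩ Metric.closedBall 0 r)
          (((fun y => (0 : EuclideanSpace ℝ (Fin 2)) + y) ''
            ((Submodule.span ℝ {e₀} : Submodule ℝ (EuclideanSpace ℝ (Fin 2))) :
              Set (EuclideanSpace ℝ (Fin 2)))) ∩ Metric.closedBall 0 r) ≤ 3 * r^2 := by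
        simp only [zero_add, Set.image_id']
        exact haus_bound hr0 (le_of_lt hr12)
      rw [flatness]
      have hbdd : BddBelow (Set.range fun
          L : {L : Submodule ℝ (EuclideanSpace ℝ (Fin 2)) // Module.finrank ℝ L = 2 - 1} =>
          Metric.hausdorffDist
            (zeroSet (MvPolynomial.X 0 ^ 4 + MvPolynomial.X 1 ^ 4 - MvPolynomial.X 1 ^ 2 :
              MvPolynomial (Fin 2) ℝ) ∩ Metric.closedBall 0 r)
            (((fun y => (0 : EuclideanSpace ℝ (Fin 2)) + y) '' (L.1 :
              Set (EuclideanSpace ℝ (Fin 2)))) ∩ Metric.closedBall 0 r)) :=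
        ⟨0, by rintro _ ⟨L, rfl⟩; exact Metric.hausdorffDist_nonneg⟩
      have hinf := ciInf_le_of_le hbdd ⟨Submodule.span ℝ {e₀}, hline⟩ hH
      calc (1/r) * _ ≤ (1/r) * (3 * r^2) :=
            mul_le_mul_of_nonneg_left hinf (by positivity)
        _ = 3 * r := by field_simp
    · have h3 : Filter.Tendsto (fun r : ℝ => 3 * r) (nhds 0) (nhds 0) := by
        simpa using (tendsto_id (α := ℝ)).const_mul (3:ℝ) |>.mono_right
          (by norm_num)
      exact h3.mono_left nhdsWithin_le_nhds
end
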